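/- arXiv:1107.2416 — 2 statements merged into one kernel-verified Lean document; each statement's English description precedes it below -/
import Mathlib

section
/- In the polynomial ring ℚ[t₁,t₂,t₃,t₄], the ideal generated by the three polynomials t₁t₃, t₃t₄, and t₂t₃ − t₃² is equal to the intersection of the principal ideal (t₃) with the ideal (t₁, t₄, t₂ − t₃). -/
open MvPolynomial

noncomputable def phi : MvPolynomial (Fin 4) ℚ →ₐ[ℚ] MvPolynomial (Fin 4) ℚ :=
  aeval ![0, X 2, X 2, 0]

lemma sub_phi_mem (p : MvPolynomial (Fin 4) ℚ) :
    p - phi p ∈ (Ideal.span {X 0, X 3, X 1 - X 2} : Ideal (MvPolynomial (Fin 4) ℚ)) := by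
  induction p using MvPolynomial.induction_on with
  | C a => simp [phi]
  | add p q hp hq =>
    have := Ideal.add_mem _ hp hq
    simpa [map_add, sub_add_sub_comm] using this
  | mul_X p i hp =>
    have hXi : X i - phi (X i) ∈
        (Ideal.span {X 0, X 3, X 1 - X 2} : Ideal (MvPolynomial (Fin 4) ℚ)) := by
      fin_cases i <;> simp [phi, aeval_X] <;>
        apply Ideal.subset_span <;> simp
    have key : p * X i - phi (p * X i)
        = (p - phi p) * X i + phi p * (X i - phi (X i)) := by
      rw [map_mul]; ring
    rw [key]
    exact Ideal.add_mem _ (Ideal.mul_mem_right _ _ hp) (Ideal.mul_mem_left _ _ hXi)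

/-- In ℚ[t₁,t₂,t₃,t₄] (variables `X 0, X 1, X 2, X 3` standing for t₁,t₂,t₃,t₄),
the ideal (t₁t₃, t₃t₄, t₂t₃ − t₃²) equals (t₃) ∩ (t₁, t₄, t₂ − t₃). -/
theorem ideal_eq_intersection :
    (Ideal.span {X 0 * X 2, X 2 * X 3, X 1 * X 2 - X 2 ^ 2} :
        Ideal (MvPolynomial (Fin 4) ℚ))
      = Ideal.span {X 2} ⊓ Ideal.span {X 0, X 3, X 1 - X 2} := by
  apply le_antisymm
  · rw [Ideal.span_le]
    rintro p hp
    simp only [Set.mem_insert_iff, Set.mem_singleton_iff] at hp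
    constructor
    · rw [SetLike.mem_coe, Ideal.mem_span_singleton]
      rcases hp with h | h | h <;> subst h
      · exact ⟨X 0, by ring⟩
      · exact ⟨X 3, by ring⟩
      · exact ⟨X 1 - X 2, by ring⟩
    · rcases hp with h | h | h <;> subst h
      · have : (X 0 : MvPolynomial (Fin 4) ℚ) ∈
            Ideal.span {X 0, X 3, X 1 - X 2} := Ideal.subset_span (by simp)
        simpa [mul_comm] using Ideal.mul_mem_left _ (X 2) this
      · have : (X 3 : MvPolynomial (Fin 4) ℚ) ∈
            Ideal.span {X 0, X 3, X 1 - X 2} := Ideal.subset_span (by simp)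
        exact Ideal.mul_mem_left _ (X 2) this
      · have : (X 1 - X 2 : MvPolynomial (Fin 4) ℚ) ∈
            Ideal.span {X 0, X 3, X 1 - X 2} := Ideal.subset_span (by simp)
        have h2 := Ideal.mul_mem_left _ (X 2) this
        have : (X 1 * X 2 - X 2 ^ 2 : MvPolynomial (Fin 4) ℚ) = X 2 * (X 1 - X 2) := by ring
        rwa [this]
  · intro p hp
    rw [Ideal.mem_inf] at hp
    obtain ⟨hp2, hpJ⟩ := hp
    rw [Ideal.mem_span_singleton] at hp2
    obtain ⟨q, rfl⟩ := hp2
    -- φ kills J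
    have hker : (Ideal.span {X 0, X 3, X 1 - X 2} : Ideal (MvPolynomial (Fin 4) ℚ))
        ≤ RingHom.ker (phi : MvPolynomial (Fin 4) ℚ →+* MvPolynomial (Fin 4) ℚ) := by
      rw [Ideal.span_le]
      rintro r hr
      simp only [Set.mem_insert_iff, Set.mem_singleton_iff] at hr
      rcases hr with h | h | h <;> subst h <;>
        simp [RingHom.mem_ker, phi, aeval_X, map_sub]
    have hphi0 : phi (X 2 * q) = 0 := hker hpJ
    have hphi2 : phi (X 2) = X 2 := by simp [phi, aeval_X]
    rw [map_mul, hphi2] at hphi0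
    have hq0 : phi q = 0 := by
      rcases mul_eq_zero.mp hphi0 with h | h
      · exact absurd h (X_ne_zero 2)
      · exact h
    have hqJ : q ∈ (Ideal.span {X 0, X 3, X 1 - X 2} :
        Ideal (MvPolynomial (Fin 4) ℚ)) := by
      have := sub_phi_mem q
      rwa [hq0, sub_zero] at this
    -- now q ∈ J implies X 2 * q ∈ I
    refine Submodule.span_induction
      (p := fun r _ => X 2 * r ∈ (Ideal.span {X 0 * X 2, X 2 * X 3, X 1 * X 2 - X 2 ^ 2} :
        Ideal (MvPolynomial (Fin 4) ℚ))) ?_ ?_ ?_ ?_ hqJ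
    · rintro r hr
      simp only [Set.mem_insert_iff, Set.mem_singleton_iff] at hr
      rcases hr with h | h | h <;> subst h
      · have : (X 2 * X 0 : MvPolynomial (Fin 4) ℚ) = X 0 * X 2 := by ring
        rw [this]; exact Ideal.subset_span (by simp)
      · exact Ideal.subset_span (by simp)
      · have : (X 2 * (X 1 - X 2) : MvPolynomial (Fin 4) ℚ) = X 1 * X 2 - X 2 ^ 2 := by ring
        rw [this]; exact Ideal.subset_span (by simp)
    · simp
    · intro a b _ _ ha hb
      rw [mul_add]; exact Ideal.add_mem _ ha hb
    · intro a b _ hb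
      have : X 2 * (a • b) = a * (X 2 * b) := by
        simp [smul_eq_mul]; ring
      rw [this]; exact Ideal.mul_mem_left _ _ hb
end

section
/- Let S be a commutative ring, let F⁰ : Sᵐ → S and R⁰ : Sˡ → Sᵐ be S-linear maps with F⁰ ∘ R⁰ = 0 and with the image of R⁰ equal to the kernel of F⁰, and let I ⊆ S be the ideal that is the image of F⁰. Suppose φ₁,…,φₙ : Sᵐ → S are S-linear maps such that for each i the composition φᵢ ∘ R⁰ : Sˡ → S has image contained in I. Then there exist S-linear maps ρ₁,…,ρₙ : Sˡ → Sᵐ such that F⁰ ∘ ρᵢ = −(φᵢ ∘ R⁰) for all i; consequently, in the polynomial ring A = S[t₁,…,tₙ] with 𝔪 = (t₁,…,tₙ), the A-linear maps F¹ = F⁰ + Σᵢ tᵢφᵢ : Aᵐ → A and R¹ = R⁰ + Σᵢ tᵢρᵢ : Aˡ → Aᵐ (obtained by base change) satisfy F¹ ∘ R¹ ≡ 0 modulo 𝔪², i.e. every entry of the composition F¹ ∘ R¹ lies in the ideal 𝔪²·A. -/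
open MvPolynomial

/-- First-order step of the Massey product algorithm.  Linear maps `Sᵐ → S` and
`Sˡ → Sᵐ` are represented by the matrices `F0` (of size 1 × m) and `R0` (of size
m × l); composition of maps corresponds to matrix multiplication.  Given that
`F⁰ ∘ R⁰ = 0`, that the image of `R⁰` is the kernel of `F⁰`, that `I` is the image
of `F⁰` (the ideal spanned by its entries), and first-order deformations
`φ₁, …, φₙ` with `φᵢ ∘ R⁰` having image in `I`, there are lifts `ρᵢ` of the
relations with `F⁰ ∘ ρᵢ = −(φᵢ ∘ R⁰)`, and in `A = S[t₁,…,tₙ]` the maps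
`F¹ = F⁰ + Σ tᵢ φᵢ` and `R¹ = R⁰ + Σ tᵢ ρᵢ` satisfy `F¹ ∘ R¹ ≡ 0 mod 𝔪²`, where
`𝔪 = (t₁,…,tₙ)`. -/
theorem first_order_deformation_equation (S : Type*) [CommRing S] (m l n : ℕ)
    (F0 : Matrix (Fin 1) (Fin m) S) (R0 : Matrix (Fin m) (Fin l) S)
    (hFR : F0 * R0 = 0)
    (hker : ∀ v : Fin m → S, F0.mulVec v = 0 ↔ ∃ w : Fin l → S, R0.mulVec w = v)
    (I : Ideal S) (hI : I = Ideal.span (Set.range (F0 0)))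
    (φ : Fin n → Matrix (Fin 1) (Fin m) S)
    (hφ : ∀ i, ∀ j, (φ i * R0) 0 j ∈ I) :
    ∃ ρ : Fin n → Matrix (Fin m) (Fin l) S,
      (∀ i, F0 * ρ i = -(φ i * R0)) ∧
      (∀ j, (((F0.map (C : S →+* MvPolynomial (Fin n) S) + ∑ i, (X i : MvPolynomial (Fin n) S) • (φ i).map C) *
              (R0.map (C : S →+* MvPolynomial (Fin n) S) + ∑ i, (X i : MvPolynomial (Fin n) S) • (ρ i).map C) :
              Matrix (Fin 1) (Fin l) (MvPolynomial (Fin n) S))) 0 j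
          ∈ (Ideal.span (Set.range (X : Fin n → MvPolynomial (Fin n) S))) ^ 2) := by

  classical
  have key : ∀ i j, ∃ c : Fin m → S, ∑ k, c k * F0 0 k = -((φ i * R0) 0 j) := by
    intro i j
    have h1 := hφ i j
    rw [hI] at h1
    obtain ⟨c, hc⟩ := (Submodule.mem_span_range_iff_exists_fun S).mp (neg_mem h1)
    exact ⟨c, by simpa [smul_eq_mul] using hc⟩
  choose c hc using key
  refine ⟨fun i => Matrix.of (fun k j => c i j k), ?_, ?_⟩
  · intro i
    ext a j
    have ha : a = 0 := Subsingleton.elim _ _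
    subst ha
    simp only [Matrix.neg_apply]
    rw [← hc i j, Matrix.mul_apply]
    exact Finset.sum_congr rfl fun k _ => mul_comm _ _
  · intro j
    set ρ : Fin n → Matrix (Fin m) (Fin l) S := fun i => Matrix.of (fun k j => c i j k) with hρ
    have hFρ : ∀ i, F0 * ρ i = -(φ i * R0) := by
      intro i
      ext a j'
      have ha : a = 0 := Subsingleton.elim _ _
      subst ha
      simp only [Matrix.neg_apply]
      rw [← hc i j', Matrix.mul_apply]
      exact Finset.sum_congr rfl fun k _ => mul_comm _ _
    have expand : (F0.map (C : S →+* MvPolynomial (Fin n) S) + ∑ i, (X i : MvPolynomial (Fin n) S) • (φ i).map C) *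
              (R0.map (C : S →+* MvPolynomial (Fin n) S) + ∑ i, (X i : MvPolynomial (Fin n) S) • (ρ i).map C)
        = ∑ i, ∑ i', (X i * X i' : MvPolynomial (Fin n) S) • ((φ i).map (C : S →+* MvPolynomial (Fin n) S) * (ρ i').map (C : S →+* MvPolynomial (Fin n) S)) := by
      rw [Matrix.add_mul, Matrix.mul_add, Matrix.mul_add]
      rw [← Matrix.map_mul, hFR]
      rw [Matrix.mul_sum, Matrix.sum_mul]
      have h2 : ∀ i : Fin n, (F0.map (C : S →+* MvPolynomial (Fin n) S) : Matrix (Fin 1) (Fin m) (MvPolynomial (Fin n) S)) * ((X i : MvPolynomial (Fin n) S) • (ρ i).map C : Matrix (Fin m) (Fin l) (MvPolynomial (Fin n) S))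
          = -((X i : MvPolynomial (Fin n) S) • ((φ i * R0).map (C : S →+* MvPolynomial (Fin n) S))) := by
        intro i
        rw [Matrix.mul_smul, ← Matrix.map_mul, hFρ i]
        have hneg : (-(φ i * R0)).map (C : S →+* MvPolynomial (Fin n) S)
            = -((φ i * R0).map (C : S →+* MvPolynomial (Fin n) S)) := by
          ext a b; simp only [Matrix.map_apply, Matrix.neg_apply, map_neg]
        rw [hneg, Matrix.map_mul, smul_neg]
      have h3 : ∀ i : Fin n, ((X i : MvPolynomial (Fin n) S) • (φ i).map C : Matrix (Fin 1) (Fin m) (MvPolynomial (Fin n) S)) * (R0.map (C : S →+* MvPolynomial (Fin n) S) : Matrix (Fin m) (Fin l) (MvPolynomial (Fin n) S))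
          = (X i : MvPolynomial (Fin n) S) • ((φ i * R0).map (C : S →+* MvPolynomial (Fin n) S)) := by
        intro i
        rw [Matrix.smul_mul, ← Matrix.map_mul]
      simp only [h2, h3]
      have h4 : (∑ i, (X i : MvPolynomial (Fin n) S) • (φ i).map C : Matrix (Fin 1) (Fin m) (MvPolynomial (Fin n) S)) * (∑ i, (X i : MvPolynomial (Fin n) S) • (ρ i).map C : Matrix (Fin m) (Fin l) (MvPolynomial (Fin n) S))
          = ∑ i, ∑ i', (X i * X i' : MvPolynomial (Fin n) S) • ((φ i).map (C : S →+* MvPolynomial (Fin n) S) * (ρ i').map (C : S →+* MvPolynomial (Fin n) S)) := by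
        rw [Matrix.sum_mul]
        refine Finset.sum_congr rfl fun i _ => ?_
        rw [Matrix.mul_sum]
        refine Finset.sum_congr rfl fun i' _ => ?_
        rw [Matrix.smul_mul, Matrix.mul_smul, smul_smul]
      rw [h4, Matrix.map_zero _ (map_zero C), Finset.sum_neg_distrib]
      rw [zero_add, neg_add_cancel_left]
    rw [expand]
    simp only [Matrix.sum_apply, Matrix.smul_apply, smul_eq_mul]
    refine Ideal.sum_mem _ fun i _ => Ideal.sum_mem _ fun i' _ => ?_
    refine Ideal.mul_mem_right _ _ ?_
    rw [sq]
    exact Ideal.mul_mem_mul (Ideal.subset_span ⟨i, rfl⟩) (Ideal.subset_span ⟨i', rfl⟩)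
end
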